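/- Let M ∈ ℝ^{N×N} be diagonal with positive entries and A ∈ ℝ^{N×N} symmetric. Consider the map F : ℝ^{2N} → ℝ^{2N} given by F(v,w) = (M⁻¹A w − β(v²+w²)⊙w, −M⁻¹A v + β(v²+w²)⊙v). Then the mass functional μ(v,w) = vᵀMv + wᵀMw satisfies ∇μ(v,w) · F(v,w) = 0 for all (v,w), i.e., μ is a first integral of the semidiscrete vector field. -/

import Mathlib

/-- The discrete mass `μ(v,w) = vᵀMv + wᵀMw` is a first integral of the SBP
semidiscretization of NLS: with `F(v,w) = (M⁻¹A w − β(v²+w²)⊙w, −M⁻¹A v + β(v²+w²)⊙v)`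
and gradient `∇μ(v,w) = (2Mv, 2Mw)`, one has `∇μ(v,w) · F(v,w) = 0`. -/
theorem mass_first_integral_of_semidiscretization (N : ℕ) (β : ℝ)
    (A M : Matrix (Fin N) (Fin N) ℝ) (hA : A.IsSymm)
    (d : Fin N → ℝ) (hd : ∀ i, 0 < d i) (hM : M = Matrix.diagonal d) :
    ∀ v w : Fin N → ℝ,
      dotProduct ((2 : ℝ) • M.mulVec v)
        (M⁻¹.mulVec (A.mulVec w) - fun i => β * (v i ^ 2 + w i ^ 2) * w i)
      + dotProduct ((2 : ℝ) • M.mulVec w)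
        (-(M⁻¹.mulVec (A.mulVec v)) + fun i => β * (v i ^ 2 + w i ^ 2) * v i)
      = 0 := by
  intro v w
  have hdet : IsUnit M.det := by
    rw [hM, Matrix.det_diagonal]
    exact isUnit_iff_ne_zero.mpr
      (Finset.prod_ne_zero_iff.mpr fun i _ => (hd i).ne')
  have hMM : M * M⁻¹ = 1 := Matrix.mul_nonsing_inv M hdet
  have hMsymm : M.transpose = M := by rw [hM]; exact (Matrix.isSymm_diagonal d)
  have key : ∀ x y : Fin N → ℝ,
      dotProduct (M.mulVec x) (M⁻¹.mulVec y) = dotProduct x y := by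
    intro x y
    rw [← Matrix.vecMul_transpose, ← Matrix.dotProduct_mulVec,
      Matrix.mulVec_mulVec, hMsymm, hMM, Matrix.one_mulVec]
  have hswap : dotProduct v (A.mulVec w) = dotProduct w (A.mulVec v) := by
    rw [Matrix.dotProduct_mulVec, ← Matrix.mulVec_transpose, hA.eq, dotProduct_comm]
  have hMv : M.mulVec v = fun i => d i * v i := by
    funext i; rw [hM, Matrix.mulVec_diagonal]
  have hMw : M.mulVec w = fun i => d i * w i := by
    funext i; rw [hM, Matrix.mulVec_diagonal]
  simp only [smul_dotProduct, dotProduct_sub, dotProduct_add,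
    dotProduct_neg, key, hswap]
  have hnl : dotProduct (M.mulVec v) (fun i => β * (v i ^ 2 + w i ^ 2) * w i)
      = dotProduct (M.mulVec w) (fun i => β * (v i ^ 2 + w i ^ 2) * v i) := by
    rw [hMv, hMw]
    simp only [dotProduct]
    exact Finset.sum_congr rfl fun i _ => by ring
  rw [hnl]
  ring
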